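/- (Bohr's power series theorem) Suppose the power series Σ_{k=0}^∞ c_k z^k (with complex coefficients c_k) converges for every z in the open unit disk and satisfies |Σ_{k=0}^∞ c_k z^k| < 1 whenever |z| < 1. Then Σ_{k=0}^∞ |c_k| |z|^k < 1 whenever |z| < 1/3. Moreover, the radius 1/3 is best possible: for every r > 1/3 there exists a power series Σ c_k z^k converging on the unit disk with |Σ c_k z^k| < 1 for |z| < 1 but with Σ |c_k| |z|^k ≥ 1 for some z with |z| < r. -/

import Mathlib

open Complex MeasureTheory Real Filter

-- L1: absolute summability below radius 1
lemma bohrL1 {c : ℕ → ℂ}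
    (H : ∀ z : ℂ, ‖z‖ < 1 → Summable (fun k => c k * z ^ k))
    {ρ : ℝ} (h0 : 0 ≤ ρ) (h1 : ρ < 1) : Summable (fun k => ‖c k‖ * ρ ^ k) := by
  set r' : ℝ := (ρ + 1) / 2 with hr'
  have hρr' : ρ < r' := by simp [hr']; linarith
  have hr'0 : 0 < r' := by positivity
  have hr'1 : r' < 1 := by simp [hr']; linarith
  have hs : Summable (fun k => c k * (r' : ℂ) ^ k) := by
    apply H
    simpa [Complex.norm_real, abs_of_pos hr'0] using hr'1
  have h2 : Tendsto (fun k => ‖c k * (r' : ℂ) ^ k‖) atTop (nhds 0) := by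
    simpa using hs.tendsto_atTop_zero.norm
  have hev : ∀ᶠ k in atTop, ‖c k‖ * r' ^ k ≤ 1 := by
    filter_upwards [h2.eventually (ge_mem_nhds one_pos)] with k hk
    simpa [norm_mul, norm_pow, Complex.norm_real, abs_of_pos hr'0] using hk
  have hg : Summable (fun k : ℕ => (ρ / r') ^ k) := by
    apply summable_geometric_of_lt_one (by positivity)
    rw [div_lt_one hr'0]; exact hρr'
  apply Summable.of_norm_bounded_eventually_nat hg
  filter_upwards [hev] with k hk
  have hck : 0 ≤ ‖c k‖ * ρ ^ k := by positivity
  rw [Real.norm_of_nonneg hck]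
  have : ‖c k‖ * ρ ^ k = (‖c k‖ * r' ^ k) * (ρ / r') ^ k := by
    rw [mul_assoc, ← mul_pow, show r' * (ρ / r') = ρ by field_simp [hr'0.ne']]
  rw [this]
  calc (‖c k‖ * r' ^ k) * (ρ / r') ^ k ≤ 1 * (ρ / r') ^ k := by
        apply mul_le_mul_of_nonneg_right hk (by positivity)
    _ = (ρ / r') ^ k := one_mul _

-- L2
lemma bohrL2 (n : ℤ) :
    (∫ θ in (0:ℝ)..(2 * π), Complex.exp (n * θ * Complex.I)) =
      if n = 0 then (2 * π : ℂ) else 0 := by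
  rcases eq_or_ne n 0 with h | h
  · simp [h]
  · rw [if_neg h]
    have h2 : ∀ θ : ℝ, (n : ℂ) * θ * Complex.I = (n * Complex.I) * θ := by intro θ; ring
    simp_rw [h2]
    rw [integral_exp_mul_complex (by simp [h, Complex.I_ne_zero])]
    have : (n : ℂ) * Complex.I * (2 * π : ℝ) = n * (2 * π * Complex.I) := by
      push_cast; ring
    rw [this, Complex.exp_int_mul_two_pi_mul_I]
    simp


lemma bohr_norm_exp (n : ℤ) (θ : ℝ) : ‖Complex.exp (n * θ * Complex.I)‖ = 1 := by
  rw [show ((n : ℂ) * θ * Complex.I) = ((n * θ : ℝ) : ℂ) * Complex.I by push_cast; ring]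
  exact Complex.norm_exp_ofReal_mul_I _

-- L3 : swap integral and sum
lemma bohrL3 {c : ℕ → ℂ} {r : ℝ} (hr0 : 0 ≤ r)
    (hsum : Summable (fun m => ‖c m‖ * r ^ m)) (d : ℤ) :
    (∫ θ in (0:ℝ)..(2 * π),
        (∑' m : ℕ, c m * ((r : ℂ) * Complex.exp (θ * Complex.I)) ^ m) *
          Complex.exp (d * θ * Complex.I)) =
      ∑' m : ℕ, c m * (r : ℂ) ^ m * (if (m : ℤ) + d = 0 then (2 * π : ℂ) else 0) := by
  have hpi : (0:ℝ) ≤ 2 * π := by positivity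
  set f : ℕ → ℝ → ℂ := fun m θ => c m * (r : ℂ) ^ m *
      Complex.exp ((((m : ℤ) + d : ℤ) : ℂ) * θ * Complex.I) with hf
  have hpt : ∀ θ : ℝ,
      (∑' m : ℕ, c m * ((r : ℂ) * Complex.exp (θ * Complex.I)) ^ m) *
        Complex.exp (d * θ * Complex.I) = ∑' m : ℕ, f m θ := by
    intro θ
    rw [← tsum_mul_right]
    congr 1; funext m
    rw [hf]; simp only
    have hexp : Complex.exp ((m : ℂ) * ((θ : ℂ) * Complex.I)) * Complex.exp (d * θ * Complex.I)
        = Complex.exp ((((m : ℤ) + d : ℤ) : ℂ) * θ * Complex.I) := by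
      rw [← Complex.exp_add]; congr 1; push_cast; ring
    rw [mul_pow, ← Complex.exp_nat_mul, mul_assoc, mul_assoc, hexp, ← mul_assoc]
  simp_rw [hpt]
  rw [intervalIntegral.integral_of_le hpi]
  have hnorm : ∀ m θ, ‖f m θ‖ = ‖c m‖ * r ^ m := by
    intro m θ
    rw [hf]; simp only [norm_mul, norm_pow, Complex.norm_real, bohr_norm_exp]
    rw [Real.norm_of_nonneg hr0, mul_one]
  rw [MeasureTheory.integral_tsum]
  · congr 1; funext m
    rw [← intervalIntegral.integral_of_le hpi, hf]
    simp only
    rw [intervalIntegral.integral_const_mul, bohrL2]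
  · intro m
    apply Continuous.aestronglyMeasurable
    rw [hf]
    fun_prop
  · have hb : ∀ m : ℕ, (∫⁻ θ in Set.Ioc (0:ℝ) (2*π), ‖f m θ‖₊) ≤
        ENNReal.ofReal (‖c m‖ * r ^ m * (2 * π)) := by
      intro m
      have hc : ∀ θ : ℝ, (‖f m θ‖₊ : ENNReal) = ENNReal.ofReal (‖c m‖ * r ^ m) := fun θ => by
        rw [← hnorm]; exact (ofReal_norm_eq_enorm _).symm
      calc (∫⁻ θ in Set.Ioc (0:ℝ) (2*π), ‖f m θ‖₊)
          = ∫⁻ _ in Set.Ioc (0:ℝ) (2*π), ENNReal.ofReal (‖c m‖ * r ^ m) :=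
            lintegral_congr fun θ => hc θ
        _ = ENNReal.ofReal (‖c m‖ * r ^ m) * volume (Set.Ioc (0:ℝ) (2*π)) :=
            setLIntegral_const _ _
        _ = ENNReal.ofReal (‖c m‖ * r ^ m) * ENNReal.ofReal (2*π - 0) := by
            rw [Real.volume_Ioc]
        _ ≤ ENNReal.ofReal (‖c m‖ * r ^ m * (2 * π)) := by
            rw [← ENNReal.ofReal_mul (by positivity)]
            apply le_of_eq; norm_num
    apply ne_top_of_le_ne_top _ (ENNReal.tsum_le_tsum hb)
    rw [← ENNReal.ofReal_tsum_of_nonneg (fun m => by positivity) (hsum.mul_right _)]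
    exact ENNReal.ofReal_ne_top


lemma intervalIntegral_conj {f : ℝ → ℂ} {a b : ℝ} :
    (∫ x in a..b, (starRingEnd ℂ) (f x)) = (starRingEnd ℂ) (∫ x in a..b, f x) := by
  simp only [intervalIntegral, integral_conj, map_sub]

lemma bohrKey {c : ℕ → ℂ}
    (H : ∀ z : ℂ, ‖z‖ < 1 → Summable (fun k => c k * z ^ k) ∧ ‖∑' k : ℕ, c k * z ^ k‖ < 1)
    {r : ℝ} (hr0 : 0 < r) (hr1 : r < 1) {k : ℕ} (hk : 1 ≤ k) {lam : ℂ} (hlam : ‖lam‖ = 1) :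
    ‖c k‖ * r ^ k ≤ 2 * (1 - (lam * c 0).re) := by
  have hπ := Real.pi_pos
  have hpi : (0:ℝ) ≤ 2 * π := by positivity
  have hsum : Summable (fun m => ‖c m‖ * r ^ m) := bohrL1 (fun z hz => (H z hz).1) hr0.le hr1
  obtain ⟨d1, hd1⟩ : ∃ d : ℤ, d = -(k:ℤ) := ⟨_, rfl⟩
  set g : ℝ → ℂ := fun θ => ∑' m : ℕ, c m * ((r:ℂ) * Complex.exp (θ * Complex.I)) ^ m with hgdef
  have hznorm : ∀ θ : ℝ, ‖(r:ℂ) * Complex.exp ((θ:ℂ) * Complex.I)‖ = r := by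
    intro θ
    rw [norm_mul, Complex.norm_real, Complex.norm_exp_ofReal_mul_I, mul_one,
      Real.norm_of_nonneg hr0.le]
  have hg1 : ∀ θ : ℝ, ‖g θ‖ < 1 := by
    intro θ
    exact (H _ (by rw [hznorm]; exact hr1)).2
  have hgcont : Continuous g := by
    apply continuous_tsum (fun m => by fun_prop) hsum
    intro m θ
    rw [norm_mul, norm_pow, hznorm]
  have hexpcont : ∀ n : ℤ, Continuous fun θ : ℝ => Complex.exp ((n:ℂ) * θ * Complex.I) := by
    intro n; fun_prop
  have hpcont : Continuous fun θ : ℝ => (1:ℂ) - lam * g θ := by fun_prop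
  have hqcont : Continuous fun θ : ℝ => (starRingEnd ℂ) ((1:ℂ) - lam * g θ) :=
    Complex.continuous_conj.comp hpcont
  -- integrals of g against characters
  have hA : (∫ θ in (0:ℝ)..(2*π), g θ * Complex.exp ((d1:ℂ) * θ * Complex.I))
      = 2 * π * (c k * (r:ℂ) ^ k) := by
    rw [hgdef, bohrL3 hr0.le hsum d1, tsum_eq_single k]
    · rw [if_pos (by omega)]; ring
    · intro m hm
      rw [if_neg (by omega), mul_zero]
  have hB : (∫ θ in (0:ℝ)..(2*π), g θ * Complex.exp (((k:ℤ):ℂ) * θ * Complex.I)) = 0 := by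
    rw [hgdef, bohrL3 hr0.le hsum (k:ℤ)]
    convert tsum_zero with m
    rw [if_neg (by omega), mul_zero]
  have hC : (∫ θ in (0:ℝ)..(2*π), g θ) = 2 * π * c 0 := by
    have h0 : (∫ θ in (0:ℝ)..(2*π), g θ * Complex.exp (((0:ℤ):ℂ) * θ * Complex.I))
        = ∑' m : ℕ, c m * (r:ℂ) ^ m * (if (m:ℤ) + 0 = 0 then (2*π:ℂ) else 0) :=
      bohrL3 hr0.le hsum 0
    simp only [Int.cast_zero, zero_mul, Complex.exp_zero, mul_one] at h0
    rw [hgdef, h0, tsum_eq_single 0]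
    · simp; try ring
    · intro m hm
      rw [if_neg (by omega), mul_zero]
  set Y : ℂ := 2 * π - lam * (2 * π * c 0) with hY
  have hYint : (∫ θ in (0:ℝ)..(2*π), ((1:ℂ) - lam * g θ)) = Y := by
    rw [intervalIntegral.integral_sub intervalIntegrable_const
      ((show Continuous fun θ => lam * g θ from continuous_const.mul hgcont).intervalIntegrable _ _),
      intervalIntegral.integral_const_mul, hC]
    rw [hY, intervalIntegral.integral_const]
    simp only [Complex.real_smul, smul_eq_mul]
    push_cast
    ring
  have hconjexp : ∀ θ : ℝ, (starRingEnd ℂ) (Complex.exp (((k:ℤ):ℂ) * θ * Complex.I))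
      = Complex.exp ((d1:ℂ) * θ * Complex.I) := by
    intro θ
    rw [← Complex.exp_conj]
    congr 1
    rw [hd1]
    simp [map_mul, Complex.conj_ofReal, Complex.conj_I]
  -- key1
  have key1 : (∫ θ in (0:ℝ)..(2*π), ((1:ℂ) - lam * g θ)
        * Complex.exp ((d1:ℂ) * θ * Complex.I))
      = -(lam * (2 * π * (c k * (r:ℂ) ^ k))) := by
    have hpt : ∀ θ : ℝ, ((1:ℂ) - lam * g θ) * Complex.exp ((d1:ℂ) * θ * Complex.I)
        = Complex.exp ((d1:ℂ) * θ * Complex.I)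
          - lam * (g θ * Complex.exp ((d1:ℂ) * θ * Complex.I)) := by intro θ; ring
    simp_rw [hpt]
    rw [intervalIntegral.integral_sub ((hexpcont d1).intervalIntegrable _ _)
        ((show Continuous fun θ : ℝ => lam * (g θ * Complex.exp ((d1:ℂ) * θ * Complex.I)) from continuous_const.mul (hgcont.mul (hexpcont d1))).intervalIntegrable _ _),
      intervalIntegral.integral_const_mul, bohrL2, hA, if_neg (by omega)]
    ring
  have hzero : (∫ θ in (0:ℝ)..(2*π), ((1:ℂ) - lam * g θ)
        * Complex.exp (((k:ℤ):ℂ) * θ * Complex.I)) = 0 := by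
    have hpt : ∀ θ : ℝ, ((1:ℂ) - lam * g θ) * Complex.exp (((k:ℤ):ℂ) * θ * Complex.I)
        = Complex.exp (((k:ℤ):ℂ) * θ * Complex.I)
          - lam * (g θ * Complex.exp (((k:ℤ):ℂ) * θ * Complex.I)) := by intro θ; ring
    simp_rw [hpt]
    rw [intervalIntegral.integral_sub ((hexpcont (k:ℤ)).intervalIntegrable _ _)
        ((show Continuous fun θ : ℝ => lam * (g θ * Complex.exp (((k:ℤ):ℂ) * θ * Complex.I)) from continuous_const.mul (hgcont.mul (hexpcont (k:ℤ)))).intervalIntegrable _ _),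
      intervalIntegral.integral_const_mul, bohrL2, hB, if_neg (by omega)]
    ring
  have key2 : (∫ θ in (0:ℝ)..(2*π), (starRingEnd ℂ) ((1:ℂ) - lam * g θ)
        * Complex.exp ((d1:ℂ) * θ * Complex.I)) = 0 := by
    have hpt : ∀ θ : ℝ, (starRingEnd ℂ) ((1:ℂ) - lam * g θ)
          * Complex.exp ((d1:ℂ) * θ * Complex.I)
        = (starRingEnd ℂ) (((1:ℂ) - lam * g θ)
            * Complex.exp (((k:ℤ):ℂ) * θ * Complex.I)) := by
      intro θ
      rw [map_mul, hconjexp]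
    simp_rw [hpt]
    rw [intervalIntegral_conj, hzero, map_zero]
  -- the real weight
  set w : ℝ → ℝ := fun θ => 2 * (1 - (lam * g θ).re) with hw
  have hwpt : ∀ θ : ℝ, ((w θ : ℝ) : ℂ)
      = ((1:ℂ) - lam * g θ) + (starRingEnd ℂ) ((1:ℂ) - lam * g θ) := by
    intro θ
    have hre : ((1:ℂ) - lam * g θ).re = 1 - (lam * g θ).re := by simp
    rw [Complex.add_conj, hre]
  have hwnonneg : ∀ θ : ℝ, 0 ≤ w θ := by
    intro θ
    have h1 : (lam * g θ).re ≤ ‖lam * g θ‖ := by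
      exact Complex.re_le_norm _
    have h2 : ‖lam * g θ‖ < 1 := by rw [norm_mul, hlam, one_mul]; exact hg1 θ
    show 0 ≤ 2 * (1 - (lam * g θ).re)
    linarith
  have hwcont : Continuous w := by fun_prop
  have key3 : (∫ θ in (0:ℝ)..(2*π), ((w θ : ℝ) : ℂ)
        * Complex.exp ((d1:ℂ) * θ * Complex.I))
      = -(lam * (2 * π * (c k * (r:ℂ) ^ k))) := by
    simp_rw [hwpt, add_mul]
    rw [intervalIntegral.integral_add
        ((show Continuous fun θ : ℝ => ((1:ℂ) - lam * g θ) * Complex.exp ((d1:ℂ) * θ * Complex.I) from hpcont.mul (hexpcont d1)).intervalIntegrable _ _)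
        ((show Continuous fun θ : ℝ => (starRingEnd ℂ) ((1:ℂ) - lam * g θ) * Complex.exp ((d1:ℂ) * θ * Complex.I) from hqcont.mul (hexpcont d1)).intervalIntegrable _ _),
      key1, key2, add_zero]
  have hwint : (∫ θ in (0:ℝ)..(2*π), w θ) = 2 * Y.re := by
    have h2 : (∫ θ in (0:ℝ)..(2*π), ((w θ : ℝ) : ℂ)) = Y + (starRingEnd ℂ) Y := by
      simp_rw [hwpt]
      rw [intervalIntegral.integral_add (hpcont.intervalIntegrable _ _)
          (hqcont.intervalIntegrable _ _), hYint, intervalIntegral_conj, hYint]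
    rw [intervalIntegral.integral_ofReal] at h2
    rw [Complex.add_conj] at h2
    exact_mod_cast h2
  -- put it together
  have hnormle : 2 * π * (‖c k‖ * r ^ k) ≤ 2 * Y.re := by
    have h1 : ‖-(lam * (2 * π * (c k * (r:ℂ) ^ k)))‖ = 2 * π * (‖c k‖ * r ^ k) := by
      simp only [norm_neg, norm_mul, norm_pow, hlam, one_mul, Complex.norm_real,
        Complex.norm_ofNat]
      rw [Real.norm_of_nonneg hπ.le, Real.norm_of_nonneg hr0.le]
      try ring
    calc 2 * π * (‖c k‖ * r ^ k)
        = ‖∫ θ in (0:ℝ)..(2*π), ((w θ : ℝ) : ℂ)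
            * Complex.exp ((d1:ℂ) * θ * Complex.I)‖ := by rw [key3, h1]
      _ ≤ ∫ θ in (0:ℝ)..(2*π), ‖((w θ : ℝ) : ℂ)
            * Complex.exp ((d1:ℂ) * θ * Complex.I)‖ :=
          intervalIntegral.norm_integral_le_integral_norm hpi
      _ = ∫ θ in (0:ℝ)..(2*π), w θ := by
          apply intervalIntegral.integral_congr
          intro θ _
          simp only
          rw [norm_mul, bohr_norm_exp, mul_one, Complex.norm_real,
            Real.norm_of_nonneg (hwnonneg θ)]
      _ = 2 * Y.re := hwint
  have hYre : Y.re = 2 * π - 2 * π * (lam * c 0).re := by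
    rw [hY]
    simp [Complex.sub_re, Complex.mul_re, Complex.mul_im]
    ring
  rw [hYre] at hnormle
  nlinarith [hπ]


lemma bohrPart1 (c : ℕ → ℂ)
    (H : ∀ z : ℂ, ‖z‖ < 1 → Summable (fun k => c k * z ^ k) ∧ ‖∑' k : ℕ, c k * z ^ k‖ < 1)
    (z : ℂ) (hz : ‖z‖ < 1 / 3) :
    Summable (fun k : ℕ => ‖c k‖ * ‖z‖ ^ k) ∧ (∑' k : ℕ, ‖c k‖ * ‖z‖ ^ k) < 1 := by
  have hρ0 : (0:ℝ) ≤ ‖z‖ := norm_nonneg z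
  set ρ : ℝ := ‖z‖ with hρ
  have hsum : Summable (fun k => ‖c k‖ * ρ ^ k) :=
    bohrL1 (fun w hw => (H w hw).1) hρ0 (by linarith)
  refine ⟨hsum, ?_⟩
  -- |c 0| < 1
  have hc0 : ‖c 0‖ < 1 := by
    have h0 := (H 0 (by norm_num)).2
    have he : ∑' k : ℕ, c k * (0:ℂ) ^ k = c 0 := by
      rw [tsum_eq_single 0]
      · simp
      · intro m hm; simp [zero_pow hm]
    rwa [he] at h0
  -- unimodular lam with (lam * c 0).re = ‖c 0‖
  obtain ⟨lam, hlam, hlamc0⟩ : ∃ lam : ℂ, ‖lam‖ = 1 ∧ (lam * c 0).re = ‖c 0‖ := by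
    rcases eq_or_ne (c 0) 0 with h | h
    · exact ⟨1, by simp, by simp [h]⟩
    · refine ⟨(starRingEnd ℂ) (c 0) / ‖c 0‖, ?_, ?_⟩
      · rw [norm_div, RCLike.norm_conj, Complex.norm_real,
          Real.norm_of_nonneg (norm_nonneg _), div_self (norm_ne_zero_iff.mpr h)]
      · have habs : ((‖c 0‖ : ℝ) : ℂ) ≠ 0 := by
          simp [h]
        have hmul : (starRingEnd ℂ) (c 0) / (‖c 0‖ : ℂ) * c 0 = ((‖c 0‖ : ℝ) : ℂ) := by
          rw [div_mul_eq_mul_div, mul_comm ((starRingEnd ℂ) (c 0)) (c 0), Complex.mul_conj,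
            Complex.normSq_eq_norm_sq, sq]
          push_cast
          rw [mul_div_assoc, div_self habs, mul_one]
        rw [hmul, Complex.ofReal_re]
  set a : ℝ := ‖c 0‖ with ha
  -- the radius for the coefficient bound
  obtain ⟨r, hr⟩ : ∃ r : ℝ, r = (3 * ρ + 1) / 2 := ⟨_, rfl⟩
  have hr0 : 0 < r := by rw [hr]; linarith
  have hr1 : r < 1 := by rw [hr]; linarith
  have h3ρ : 3 * ρ < r := by rw [hr]; linarith
  obtain ⟨q, hq⟩ : ∃ q : ℝ, q = ρ / r := ⟨_, rfl⟩
  have hq0 : 0 ≤ q := by rw [hq]; positivity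
  have hq3 : q < 1 / 3 := by rw [hq, div_lt_iff₀ hr0]; linarith
  have hq1 : q < 1 := by linarith
  have hkey : ∀ k : ℕ, 1 ≤ k → ‖c k‖ * ρ ^ k ≤ 2 * (1 - a) * q ^ k := by
    intro k hk
    have h1 : ‖c k‖ * r ^ k ≤ 2 * (1 - a) := by
      rw [← hlamc0]
      exact bohrKey H hr0 hr1 hk hlam
    have hρrq : ρ = r * q := by rw [hq]; field_simp
    calc ‖c k‖ * ρ ^ k = (‖c k‖ * r ^ k) * q ^ k := by rw [hρrq, mul_pow]; ring
      _ ≤ 2 * (1 - a) * q ^ k := by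
          apply mul_le_mul_of_nonneg_right h1 (by positivity)
  -- sum the tail
  have hgeo : Summable (fun k : ℕ => q ^ k) := summable_geometric_of_lt_one hq0 hq1
  have hgeo1 : Summable (fun k : ℕ => 2 * (1 - a) * q ^ (k + 1)) := by
    apply Summable.mul_left
    exact (summable_nat_add_iff (f := fun k : ℕ => q ^ k) 1).2 hgeo
  have htail : (∑' k : ℕ, ‖c (k + 1)‖ * ρ ^ (k + 1)) ≤ 2 * (1 - a) * ((1 - q)⁻¹ * q) := by
    have h1 : (∑' k : ℕ, ‖c (k + 1)‖ * ρ ^ (k + 1)) ≤ ∑' k : ℕ, 2 * (1 - a) * q ^ (k + 1) := by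
      apply Summable.tsum_le_tsum
      · intro k; exact hkey (k + 1) (by omega)
      · exact (summable_nat_add_iff (f := fun k : ℕ => ‖c k‖ * ρ ^ k) 1).2 hsum
      · exact hgeo1
    have hs : (∑' k : ℕ, q ^ (k + 1)) = (1 - q)⁻¹ * q := by
      simp_rw [pow_succ]
      rw [tsum_mul_right, tsum_geometric_of_lt_one hq0 hq1]
    have h2 : (∑' k : ℕ, 2 * (1 - a) * q ^ (k + 1)) = 2 * (1 - a) * ((1 - q)⁻¹ * q) := by
      rw [tsum_mul_left, hs]
    linarith [h1, h2.le, h2.ge]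
  rw [Summable.tsum_eq_zero_add hsum]
  have hq1' : 0 < 1 - q := by linarith
  have hfrac : 2 * (1 - a) * ((1 - q)⁻¹ * q) < 1 - a := by
    have h3 : (1 - q)⁻¹ * q < 1 / 2 := by
      rw [← div_eq_inv_mul, div_lt_div_iff₀ hq1' (by norm_num)]
      linarith
    nlinarith [hc0, hq0, h3, hq1']
  have ha1 : a < 1 := hc0
  simp only [pow_zero, mul_one]
  calc a + ∑' k : ℕ, ‖c (k + 1)‖ * ρ ^ (k + 1)
      ≤ a + 2 * (1 - a) * ((1 - q)⁻¹ * q) := by linarith [htail]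
    _ < a + (1 - a) := by linarith [hfrac]
    _ = 1 := by ring


noncomputable def bohrC (a : ℝ) : ℕ → ℂ :=
  fun k => if k = 0 then (a:ℂ) else -(1 - (a:ℂ)^2) * (a:ℂ)^(k-1)

lemma bohrC_norm0 {a : ℝ} (h0 : 0 < a) : ‖bohrC a 0‖ = a := by
  simp [bohrC, abs_of_pos h0]

lemma bohrC_norm_succ {a : ℝ} (h0 : 0 < a) (h1 : a < 1) (k : ℕ) :
    ‖bohrC a (k+1)‖ = (1 - a^2) * a^k := by
  have h2 : (1:ℝ) - a^2 > 0 := by nlinarith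
  simp only [bohrC, Nat.succ_ne_zero, if_false, Nat.add_sub_cancel]
  rw [norm_mul, norm_neg, norm_pow]
  rw [show (1 - (a:ℂ)^2) = ((1 - a^2 : ℝ) : ℂ) by push_cast; ring]
  rw [Complex.norm_real, Complex.norm_real]
  rw [Real.norm_of_nonneg h2.le, Real.norm_of_nonneg h0.le]

lemma bohrC_summable {a : ℝ} (h0 : 0 < a) (h1 : a < 1) {w : ℂ} (hw : ‖w‖ < 1) :
    Summable (fun k => bohrC a k * w ^ k) := by
  apply Summable.of_norm_bounded (g := fun k : ℕ => a⁻¹ * (a * ‖w‖)^k)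
  · apply Summable.mul_left
    apply summable_geometric_of_lt_one (by positivity)
    nlinarith [norm_nonneg w]
  · intro k
    rw [norm_mul, norm_pow]
    cases k with
    | zero =>
      simp [bohrC_norm0 h0]
      rw [show a⁻¹ = 1/a from (one_div a).symm, le_div_iff₀ h0]
      nlinarith
    | succ k =>
      rw [bohrC_norm_succ h0 h1, mul_pow]
      have e1 : a⁻¹ * (a ^ (k+1) * ‖w‖^(k+1)) = a ^ k * ‖w‖^(k+1) := by
        field_simp
        ring
      rw [e1]
      have : (1 - a^2) * a^k ≤ a^k := by nlinarith [pow_nonneg h0.le k]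
      calc (1 - a^2) * a^k * ‖w‖^(k+1) ≤ a^k * ‖w‖^(k+1) := by
            apply mul_le_mul_of_nonneg_right this (by positivity)
        _ = a^k * ‖w‖^(k+1) := rfl

lemma bohrC_tsum {a : ℝ} (h0 : 0 < a) (h1 : a < 1) {w : ℂ} (hw : ‖w‖ < 1) :
    (∑' k : ℕ, bohrC a k * w ^ k) = ((a:ℂ) - w) * (1 - (a:ℂ)*w)⁻¹ := by
  have haw : ‖(a:ℂ) * w‖ < 1 := by
    rw [norm_mul, Complex.norm_real, Real.norm_of_nonneg h0.le]
    nlinarith [norm_nonneg w]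
  have hne : (1:ℂ) - (a:ℂ)*w ≠ 0 := by
    intro hcon
    have h4 : (a:ℂ)*w = 1 := by linear_combination -hcon
    rw [h4] at haw
    norm_num at haw
  rw [Summable.tsum_eq_zero_add (bohrC_summable h0 h1 hw)]
  have hterm : ∀ k : ℕ, bohrC a (k+1) * w^(k+1) = (-(1 - (a:ℂ)^2) * w) * ((a:ℂ)*w)^k := by
    intro k
    simp only [bohrC, Nat.succ_ne_zero, if_false, Nat.add_sub_cancel]
    rw [mul_pow, pow_succ]
    ring
  simp_rw [hterm]
  rw [tsum_mul_left, tsum_geometric_of_norm_lt_one haw]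
  simp only [bohrC, if_pos rfl, if_true, pow_zero, mul_one]
  field_simp
  ring

lemma bohrC_maps {a : ℝ} (h0 : 0 < a) (h1 : a < 1) (w : ℂ) (hw : ‖w‖ < 1) :
    Summable (fun k => bohrC a k * w ^ k) ∧ ‖∑' k : ℕ, bohrC a k * w ^ k‖ < 1 := by
  refine ⟨bohrC_summable h0 h1 hw, ?_⟩
  rw [bohrC_tsum h0 h1 hw]
  have hw2 : w.re^2 + w.im^2 < 1 := by
    have := Complex.sq_norm w
    have h3 : ‖w‖ < 1 := hw
    nlinarith [norm_nonneg w, Complex.normSq_apply w]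
  have hnormSq : Complex.normSq ((a:ℂ) - w) < Complex.normSq (1 - (a:ℂ)*w) := by
    have hkey : 0 < (1 - a^2) * (1 - (w.re^2 + w.im^2)) := by
      apply mul_pos
      · nlinarith
      · linarith
    simp only [Complex.normSq_apply, Complex.sub_re, Complex.sub_im, Complex.mul_re,
      Complex.mul_im, Complex.ofReal_re, Complex.ofReal_im, Complex.one_re, Complex.one_im]
    nlinarith [hkey]
  have habs : ‖(a:ℂ) - w‖ < ‖1 - (a:ℂ)*w‖ := by
    apply lt_of_pow_lt_pow_left₀ 2 (norm_nonneg _)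
    rw [Complex.sq_norm, Complex.sq_norm]
    exact hnormSq
  have hpos : 0 < ‖1 - (a:ℂ)*w‖ := lt_of_le_of_lt (norm_nonneg _) habs
  rw [norm_mul, norm_inv, ← div_eq_mul_inv, div_lt_one hpos]
  exact habs

lemma bohrC_majorant {a : ℝ} (h0 : 0 < a) (h1 : a < 1) {s : ℝ} (hs0 : 0 ≤ s) (hs1 : s < 1) :
    Summable (fun k : ℕ => ‖bohrC a k‖ * s ^ k) ∧
    (∑' k : ℕ, ‖bohrC a k‖ * s ^ k) = a + (1 - a^2) * s * (1 - a*s)⁻¹ := by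
  have has : a * s < 1 := by nlinarith
  have has0 : 0 ≤ a * s := by positivity
  have hsummable : Summable (fun k : ℕ => ‖bohrC a k‖ * s ^ k) := by
    apply Summable.of_nonneg_of_le (fun k => by positivity)
      (f := fun k : ℕ => a⁻¹ * (a * s)^k)
    · intro k
      cases k with
      | zero =>
        simp [bohrC_norm0 h0]
        rw [show a⁻¹ = 1/a from (one_div a).symm, le_div_iff₀ h0]
        nlinarith
      | succ k =>
        rw [bohrC_norm_succ h0 h1, mul_pow]
        have e1 : a⁻¹ * (a ^ (k+1) * s^(k+1)) = a ^ k * s^(k+1) := by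
          field_simp
          ring
        rw [e1]
        have h2 : (1 - a^2) * a^k ≤ a^k := by nlinarith [pow_nonneg h0.le k]
        apply mul_le_mul_of_nonneg_right h2 (by positivity)
    · exact Summable.mul_left _ (summable_geometric_of_lt_one has0 has)
  refine ⟨hsummable, ?_⟩
  rw [Summable.tsum_eq_zero_add hsummable]
  have hterm : ∀ k : ℕ, ‖bohrC a (k+1)‖ * s^(k+1) = ((1 - a^2)*s) * (a*s)^k := by
    intro k
    rw [bohrC_norm_succ h0 h1, mul_pow, pow_succ]
    ring
  simp_rw [hterm]
  rw [tsum_mul_left, tsum_geometric_of_lt_one has0 has]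
  rw [bohrC_norm0 h0]
  simp only [pow_zero, mul_one]
  try ring

lemma bohrPart2 (r : ℝ) (hr : 1/3 < r) :
    ∃ c : ℕ → ℂ,
      (∀ z : ℂ, ‖z‖ < 1 → Summable (fun k => c k * z ^ k) ∧ ‖∑' k : ℕ, c k * z ^ k‖ < 1) ∧
      ∃ z : ℂ, ‖z‖ < r ∧ 1 ≤ ∑' k : ℕ, ‖c k‖ * ‖z‖ ^ k := by
  obtain ⟨t, ht⟩ : ∃ t : ℝ, t = min r 1 := ⟨_, rfl⟩
  have ht3 : 1/3 < t := by rw [ht]; exact lt_min hr (by norm_num)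
  have ht1 : t ≤ 1 := by rw [ht]; exact min_le_right _ _
  have htr : t ≤ r := by rw [ht]; exact min_le_left _ _
  have ht0 : 0 < t := by linarith
  obtain ⟨a, ha⟩ : ∃ a : ℝ, a = ((1/t - 1)/2 + 1)/2 := ⟨_, rfl⟩
  have h1t1 : 1 ≤ 1/t := by rw [le_div_iff₀ ht0]; linarith
  have h1t3 : 1/t < 3 := by rw [div_lt_iff₀ ht0]; linarith
  have h0a : 0 < a := by rw [ha]; linarith
  have h1a : a < 1 := by rw [ha]; linarith
  have haa0 : (1/t - 1)/2 < a := by rw [ha]; linarith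
  obtain ⟨s, hs⟩ : ∃ s : ℝ, s = 1/(1+2*a) := ⟨_, rfl⟩
  have h12a : (0:ℝ) < 1 + 2*a := by linarith
  have hs0 : 0 < s := by rw [hs]; positivity
  have hst : s < t := by
    rw [hs, div_lt_iff₀ h12a]
    have : 1/t < 1 + 2*a := by linarith
    rw [div_lt_iff₀ ht0] at this
    linarith [this]
  have hs1 : s < 1 := lt_of_lt_of_le hst ht1
  have hsr : s < r := lt_of_lt_of_le hst htr
  have hsnorm : ‖((s:ℝ):ℂ)‖ = s := by
    rw [Complex.norm_real, Real.norm_of_nonneg hs0.le]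
  refine ⟨bohrC a, fun w hw => bohrC_maps h0a h1a w hw, ((s:ℝ):ℂ), ?_, ?_⟩
  · rw [hsnorm]; exact hsr
  · rw [hsnorm]
    rw [(bohrC_majorant h0a h1a hs0.le hs1).2]
    have h1pa : (0:ℝ) < 1 + a := by linarith
    have h1as : 1 - a*s = (1+a)/(1+2*a) := by
      rw [hs]
      field_simp
      ring
    rw [h1as, hs]
    rw [inv_div]
    have heq : a + (1 - a^2) * (1/(1+2*a)) * ((1+2*a)/(1+a)) = 1 := by
      field_simp
      ring
    rw [heq]


/-- **Bohr's power series theorem.** If the power series `Σ c_k z^k` converges on the open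
unit disk and `|Σ c_k z^k| < 1` whenever `|z| < 1`, then `Σ |c_k| |z|^k < 1` whenever
`|z| < 1/3`. Moreover, the radius `1/3` is best possible: for every `r > 1/3` there is a
power series converging on the unit disk with modulus `< 1` there, but whose majorant series
reaches `1` at some point of modulus `< r`. -/
theorem bohr_power_series_theorem :
    (∀ c : ℕ → ℂ,
      (∀ z : ℂ, ‖z‖ < 1 → Summable (fun k => c k * z ^ k) ∧ ‖∑' k : ℕ, c k * z ^ k‖ < 1) →
      ∀ z : ℂ, ‖z‖ < 1 / 3 →
        Summable (fun k : ℕ => ‖c k‖ * ‖z‖ ^ k) ∧ (∑' k : ℕ, ‖c k‖ * ‖z‖ ^ k) < 1) ∧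
    (∀ r : ℝ, 1 / 3 < r →
      ∃ c : ℕ → ℂ,
        (∀ z : ℂ, ‖z‖ < 1 → Summable (fun k => c k * z ^ k) ∧ ‖∑' k : ℕ, c k * z ^ k‖ < 1) ∧
        ∃ z : ℂ, ‖z‖ < r ∧ 1 ≤ ∑' k : ℕ, ‖c k‖ * ‖z‖ ^ k) := by
  exact ⟨fun c H z hz => bohrPart1 c H z hz, fun r hr => bohrPart2 r hr⟩
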